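/- Let c > 0 be a real number and define r(t) = ∫₀ᵗ e^{s²/(4c)} ds and K(t) = -e^{-t²/(2c)}/c for t > 0. Then for every real α > 1 and every T > 0 there exists t ≥ T such that K(t) > -α(α-1)/r(t)². In particular, there is no constant α > 1 for which K(t) ≤ -α(α-1)/r(t)² holds for all sufficiently large t. -/

import Mathlib

open Real Filter MeasureTheory

private lemma r_upper (c t : ℝ) (hc : 0 < c) (ht : 0 < t) :
    (∫ s in (0:ℝ)..t, Real.exp (s ^ 2 / (4 * c))) ≤ 4 * c / t * Real.exp (t ^ 2 / (4 * c)) := by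
  set k : ℝ := t / (4 * c) with hk
  have hkpos : 0 < k := by positivity
  have hint1 : IntervalIntegrable (fun s : ℝ => Real.exp (s ^ 2 / (4 * c))) volume 0 t :=
    (Real.continuous_exp.comp (by continuity)).intervalIntegrable 0 t
  have hint2 : IntervalIntegrable (fun s : ℝ => Real.exp (k * s)) volume 0 t :=
    (Real.continuous_exp.comp (by continuity)).intervalIntegrable 0 t
  have hmono : (∫ s in (0:ℝ)..t, Real.exp (s ^ 2 / (4 * c)))
      ≤ ∫ s in (0:ℝ)..t, Real.exp (k * s) := by
    apply intervalIntegral.integral_mono_on ht.le hint1 hint2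
    intro x hx
    apply Real.exp_le_exp.mpr
    rw [hk]
    rw [div_le_iff₀ (by positivity)]
    have h1 : x ^ 2 ≤ t * x := by nlinarith [hx.1, hx.2]
    calc x ^ 2 ≤ t * x := h1
      _ = t / (4 * c) * x * (4 * c) := by field_simp
  have hderiv : ∀ x ∈ Set.uIcc (0:ℝ) t,
      HasDerivAt (fun s => Real.exp (k * s) / k) (Real.exp (k * x)) x := by
    intro x _
    have h := ((Real.hasDerivAt_exp (k * x)).comp x ((hasDerivAt_id x).const_mul k)).div_const k
    simpa [mul_comm, mul_div_assoc, mul_div_cancel_left₀ _ hkpos.ne'] using h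
  have hcalc : (∫ s in (0:ℝ)..t, Real.exp (k * s))
      = Real.exp (k * t) / k - Real.exp (k * 0) / k :=
    intervalIntegral.integral_eq_sub_of_hasDerivAt hderiv hint2
  have hkt : k * t = t ^ 2 / (4 * c) := by rw [hk]; field_simp
  have hinvk : 1 / k = 4 * c / t := by rw [hk]; field_simp
  calc (∫ s in (0:ℝ)..t, Real.exp (s ^ 2 / (4 * c)))
      ≤ ∫ s in (0:ℝ)..t, Real.exp (k * s) := hmono
    _ = Real.exp (k * t) / k - Real.exp (k * 0) / k := hcalc
    _ ≤ Real.exp (k * t) / k := by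
        have : 0 < Real.exp (k * 0) / k := by positivity
        linarith
    _ = 4 * c / t * Real.exp (t ^ 2 / (4 * c)) := by
        rw [hkt, div_eq_mul_one_div, hinvk, mul_comm]

private lemma r_pos (c t : ℝ) (hc : 0 < c) (ht : 0 < t) :
    0 < ∫ s in (0:ℝ)..t, Real.exp (s ^ 2 / (4 * c)) := by
  apply intervalIntegral.intervalIntegral_pos_of_pos
  · exact (Real.continuous_exp.comp (by continuity)).intervalIntegrable 0 t
  · intro x; exact Real.exp_pos _
  · exact ht

/-- Remark 2.4: with `r(t) = ∫₀ᵗ e^{s²/(4c)} ds` and `K(t) = -e^{-t²/(2c)}/c` (c > 0), for every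
`α > 1` and every `T > 0` there is `t ≥ T` with `K(t) > -α(α-1)/r(t)²`; in particular there is
no constant `α > 1` with `K(t) ≤ -α(α-1)/r(t)²` for all sufficiently large `t`. -/
theorem stmt12 (c : ℝ) (hc : 0 < c)
    (r K : ℝ → ℝ)
    (hr : r = fun t => ∫ s in (0:ℝ)..t, Real.exp (s ^ 2 / (4 * c)))
    (hK : K = fun t => -Real.exp (-t ^ 2 / (2 * c)) / c) :
    (∀ α : ℝ, 1 < α → ∀ T : ℝ, 0 < T → ∃ t, T ≤ t ∧ -(α * (α - 1)) / r t ^ 2 < K t) ∧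
    ¬ ∃ α : ℝ, 1 < α ∧ ∃ T : ℝ, ∀ t, T ≤ t → K t ≤ -(α * (α - 1)) / r t ^ 2 := by
  have main : ∀ α : ℝ, 1 < α → ∀ T : ℝ, 0 < T →
      ∃ t, T ≤ t ∧ -(α * (α - 1)) / r t ^ 2 < K t := by
    intro α hα T hT
    set ε : ℝ := α * (α - 1) with hε
    have hεpos : 0 < ε := by nlinarith
    have hsq : 0 < Real.sqrt (ε * c) := Real.sqrt_pos.mpr (by positivity)
    set t : ℝ := max T (4 * c / Real.sqrt (ε * c) + 1) with htdef
    have htT : T ≤ t := le_max_left _ _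
    have htpos : 0 < t := lt_of_lt_of_le hT htT
    have htbig : 4 * c / Real.sqrt (ε * c) < t := by
      have : 4 * c / Real.sqrt (ε * c) + 1 ≤ t := le_max_right _ _
      linarith
    refine ⟨t, htT, ?_⟩
    have hrt : r t = ∫ s in (0:ℝ)..t, Real.exp (s ^ 2 / (4 * c)) := by rw [hr]
    have hrpos : 0 < r t := by rw [hrt]; exact r_pos c t hc htpos
    have hrub : r t ≤ 4 * c / t * Real.exp (t ^ 2 / (4 * c)) := by
      rw [hrt]; exact r_upper c t hc htpos
    -- key estimate: exp(-t²/(2c)) * r(t)² < ε * c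
    have hexp2 : Real.exp (t ^ 2 / (4 * c)) ^ 2 = Real.exp (t ^ 2 / (2 * c)) := by
      rw [← Real.exp_nat_mul]
      congr 1
      field_simp
      ring
    have hr2 : r t ^ 2 ≤ (4 * c / t) ^ 2 * Real.exp (t ^ 2 / (2 * c)) := by
      have := mul_self_le_mul_self hrpos.le hrub
      calc r t ^ 2 = r t * r t := sq (r t) ▸ (sq (r t)).symm ▸ (pow_two (r t))
        _ ≤ (4 * c / t * Real.exp (t ^ 2 / (4 * c))) * (4 * c / t * Real.exp (t ^ 2 / (4 * c))) := this
        _ = (4 * c / t) ^ 2 * Real.exp (t ^ 2 / (4 * c)) ^ 2 := by ring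
        _ = (4 * c / t) ^ 2 * Real.exp (t ^ 2 / (2 * c)) := by rw [hexp2]
    have hcancel : Real.exp (-t ^ 2 / (2 * c)) * Real.exp (t ^ 2 / (2 * c)) = 1 := by
      rw [← Real.exp_add]; simp [neg_div]
    have hkey : Real.exp (-t ^ 2 / (2 * c)) * r t ^ 2 < ε * c := by
      have h1 : Real.exp (-t ^ 2 / (2 * c)) * r t ^ 2 ≤ (4 * c / t) ^ 2 := by
        calc Real.exp (-t ^ 2 / (2 * c)) * r t ^ 2
            ≤ Real.exp (-t ^ 2 / (2 * c)) * ((4 * c / t) ^ 2 * Real.exp (t ^ 2 / (2 * c))) :=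
              mul_le_mul_of_nonneg_left hr2 (Real.exp_pos _).le
          _ = (4 * c / t) ^ 2 * (Real.exp (-t ^ 2 / (2 * c)) * Real.exp (t ^ 2 / (2 * c))) := by ring
          _ = (4 * c / t) ^ 2 := by rw [hcancel, mul_one]
      have h2 : (4 * c / t) ^ 2 < ε * c := by
        have hts : 4 * c < t * Real.sqrt (ε * c) := by
          rw [div_lt_iff₀ hsq] at htbig; linarith
        have hsqsq : Real.sqrt (ε * c) ^ 2 = ε * c := Real.sq_sqrt (by positivity)
        rw [div_pow, div_lt_iff₀ (by positivity)]
        nlinarith [htpos, hsq, mul_pos htpos hsq]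
      linarith
    -- convert to the stated inequality
    rw [hK]
    simp only
    rw [neg_div, neg_div, neg_lt_neg_iff]
    rw [div_lt_div_iff₀ hc (by positivity : (0:ℝ) < r t ^ 2)]
    calc Real.exp (-t ^ 2 / (2 * c)) * r t ^ 2 < ε * c := hkey
      _ = α * (α - 1) * c := by rw [hε]
  refine ⟨main, ?_⟩
  rintro ⟨α, hα, T, hT⟩
  obtain ⟨t, ht1, ht2⟩ := main α hα (max T 1) (lt_of_lt_of_le one_pos (le_max_right T 1))
  have := hT t (le_trans (le_max_left T 1) ht1)
  linarith
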